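/- The number of edges m_D of the recursively constructed lower-bound graph G_𝒮 with parameters C (even, C ≥ 1) and D satisfies m_D ≤ 2^{C·2^D + D}, and hence the number of vertices is at most 2^{C·2^{D+1}}. -/

import Mathlib

lemma choose_le_two_pow' (n k : ℕ) : n.choose k ≤ 2 ^ n := by
  rcases le_or_gt k n with h | h
  · calc n.choose k ≤ ∑ m ∈ Finset.range (n + 1), n.choose m :=
        Finset.single_le_sum (fun i _ => Nat.zero_le _)
          (Finset.mem_range.mpr (by omega))
      _ = 2 ^ n := Nat.sum_range_choose n
  · rw [Nat.choose_eq_zero_of_lt h]; positivity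

/-- The number of edges `m D` of the recursively constructed
lower-bound graph `G_𝒮` with parameters `C` (even, `C ≥ 1`) and `D` satisfies the
recurrence `m 1 = 1`, `m D = 2^(D-1) + (C choose C/2)^(2^(D-1)) * m (D-1)` for
`D ≥ 2`, and its number of vertices `v D` is at most `2 * m D`. Then
`m D ≤ 2^(C·2^D + D)`, and hence `v D ≤ 2^(C·2^(D+1))`, for all `D ≥ 1`. -/
theorem lower_bound_graph_size (C : ℕ) (hC : 1 ≤ C) (hCeven : Even C)
    (m v : ℕ → ℕ) (hm1 : m 1 = 1)
    (hmrec : ∀ D, 2 ≤ D → m D = 2 ^ (D - 1) + (C.choose (C / 2)) ^ (2 ^ (D - 1)) * m (D - 1))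
    (hv : ∀ D, 1 ≤ D → v D ≤ 2 * m D) :
    ∀ D, 1 ≤ D → m D ≤ 2 ^ (C * 2 ^ D + D) ∧ v D ≤ 2 ^ (C * 2 ^ (D + 1)) := by
  have hm : ∀ D, 1 ≤ D → m D ≤ 2 ^ (C * 2 ^ D + D) := by
    intro D hD
    induction D with
    | zero => omega
    | succ n ih =>
      rcases Nat.lt_or_ge n 1 with h | h
      · interval_cases n
        rw [hm1]
        exact Nat.one_le_two_pow
      · have hrec := hmrec (n + 1) (by omega)
        simp only [Nat.add_sub_cancel] at hrec
        have h1 : (C.choose (C / 2)) ^ (2 ^ n) * m n ≤ 2 ^ (C * 2 ^ n + (C * 2 ^ n + n)) := by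
          rw [pow_add]
          apply Nat.mul_le_mul
          · calc (C.choose (C / 2)) ^ (2 ^ n) ≤ (2 ^ C) ^ (2 ^ n) :=
                Nat.pow_le_pow_left (choose_le_two_pow' C (C / 2)) _
              _ = 2 ^ (C * 2 ^ n) := by rw [← pow_mul]
          · exact ih h
        have h2 : 2 ^ n ≤ 2 ^ (C * 2 ^ n + (C * 2 ^ n + n)) :=
          Nat.pow_le_pow_right (by norm_num) (by nlinarith [Nat.one_le_two_pow (n := n)])
        have hexp : C * 2 ^ (n + 1) + (n + 1) = (C * 2 ^ n + (C * 2 ^ n + n)) + 1 := by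
          ring
        rw [hrec, hexp, pow_succ]
        omega
  intro D hD
  refine ⟨hm D hD, ?_⟩
  calc v D ≤ 2 * m D := hv D hD
    _ ≤ 2 * 2 ^ (C * 2 ^ D + D) := Nat.mul_le_mul_left 2 (hm D hD)
    _ = 2 ^ (C * 2 ^ D + D + 1) := by rw [pow_succ]; ring
    _ ≤ 2 ^ (C * 2 ^ (D + 1)) := by
        apply Nat.pow_le_pow_right (by norm_num)
        have h2 : D < 2 ^ D := Nat.lt_two_pow_self (n := D)
        have : 2 ^ (D+1) = 2 ^ D + 2 ^ D := by ring
        nlinarith
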